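/- Take σ = 1. Let F ⊂ ℝⁿ be a linear subspace of dimension d < n with projection Π, ε₂, ε_∞ > 0, 0 < α < 1, 0 < γ < 1. Define T(Y) = ∑ᵢ (Yᵢ − (ΠY)ᵢ)², let q be the (1−γ)-quantile of the chi-squared distribution with n−d degrees of freedom, and z = Φ⁻¹(1 − α/(4n)). Define the band: if T ≤ q then L = ΠY − (Ω_F·z + ε_∞)·𝟙 and U = ΠY + (Ω_F·z + ε_∞)·𝟙; if T > q then L = Y − z·𝟙 and U = Y + z·𝟙 (𝟙 the all-ones vector). Let V = { f ∈ ℝⁿ : ‖f − Πf‖ ≤ ε₂ and ‖f − Πf‖_∞ ≤ ε_∞ }. Then inf_{f∈V} P_f( L ≤ f ≤ U ) ≥ 1 − α. -/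

import Mathlib

open MeasureTheory ProbabilityTheory Real

noncomputable section

/-- Product Gaussian measure `N(f, σ² Iₙ)` on `ℝⁿ`. -/
def gaussP (n : ℕ) (f : Fin n → ℝ) (σ : ℝ) : Measure (Fin n → ℝ) :=
  Measure.pi fun i => gaussianReal (f i) (Real.toNNReal (σ ^ 2))

/-- Standard normal CDF `Φ`. -/
def stdCDF (x : ℝ) : ℝ := ((gaussianReal 0 1) (Set.Iic x)).toReal

/-- Standard normal density `φ`. -/
def stdPDF (x : ℝ) : ℝ := Real.exp (-(x ^ 2) / 2) / Real.sqrt (2 * Real.pi)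

/-- `τ(ε) = Φ(ε/2) - Φ(-ε/2)`. -/
def tau (ε : ℝ) : ℝ := stdCDF (ε / 2) - stdCDF (-(ε / 2))

/-- Inverse of `τ`. -/
def tauInv (p : ℝ) : ℝ := Function.invFun tau p

/-- Standard normal quantile function `Φ⁻¹`. -/
def PhiInv (p : ℝ) : ℝ := Function.invFun stdCDF p

/-- Normalized Euclidean norm `‖v‖ = √((1/n) ∑ vᵢ²)`. -/
def norm2 (n : ℕ) (v : Fin n → ℝ) : ℝ := Real.sqrt ((∑ i, (v i) ^ 2) / n)

/-- Sup norm `‖v‖_∞ = maxᵢ |vᵢ|`. -/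
def normInf (n : ℕ) (v : Fin n → ℝ) : ℝ := ⨆ i, |v i|

/-- Normalized inner product. -/
def inner2 (n : ℕ) (u v : Fin n → ℝ) : ℝ := (∑ i, u i * v i) / n

/-- Total variation distance between two measures on `ℝⁿ`. -/
def dTV (n : ℕ) (P Q : Measure (Fin n → ℝ)) : ℝ :=
  ⨆ A : {A : Set (Fin n → ℝ) // MeasurableSet A}, |(P A).toReal - (Q A).toReal|

/-- Width of the band `(L, U)` at data `y`. -/
def width (n : ℕ) (L U : (Fin n → ℝ) → Fin n → ℝ) (y : Fin n → ℝ) : ℝ :=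
  ⨆ i, (U y i - L y i)

/-- The band `(L,U)` covers `g` at data `y`. -/
def covers (n : ℕ) (L U : (Fin n → ℝ) → Fin n → ℝ) (g y : Fin n → ℝ) : Prop :=
  ∀ i, L y i ≤ g i ∧ g i ≤ U y i

/-- `P` is the orthogonal projection onto the subspace `F` of `ℝⁿ`. -/
def IsOrthProjOn (n : ℕ) (F : Submodule ℝ (Fin n → ℝ))
    (P : (Fin n → ℝ) →ₗ[ℝ] (Fin n → ℝ)) : Prop :=
  (∀ f, P f ∈ F) ∧ (∀ f, ∀ g ∈ F, inner2 n (f - P f) g = 0)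

/-- `Ω_F = max_i ‖Π_F eᵢ‖ / ‖eᵢ‖`. -/
def OmegaF (n : ℕ) (P : (Fin n → ℝ) →ₗ[ℝ] (Fin n → ℝ)) : ℝ :=
  ⨆ i : Fin n, norm2 n (P (Pi.single i 1)) / norm2 n (Pi.single i 1)

/-- The `p`-quantile of the chi-squared distribution with `m` degrees of freedom. -/
def chiSqQuantile (m : ℕ) (p : ℝ) : ℝ :=
  sInf {t : ℝ | ENNReal.ofReal p ≤
    (Measure.pi fun _ : Fin m => gaussianReal 0 1) {z | ∑ k, (z k) ^ 2 ≤ t}}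


/-- Goodness-of-fit statistic `T(Y) = ∑ᵢ (Yᵢ − (ΠY)ᵢ)²`. -/
def Tstat (n : ℕ) (P : (Fin n → ℝ) →ₗ[ℝ] (Fin n → ℝ)) (y : Fin n → ℝ) : ℝ :=
  ∑ i, (y i - P y i) ^ 2

/-- `z = Φ⁻¹(1 − α/(4n))`. -/
def zCrit (n : ℕ) (α : ℝ) : ℝ := PhiInv (1 - α / (4 * n))

/-- `c = Ω_F·z + ε_∞`. -/
def cRad (n : ℕ) (P : (Fin n → ℝ) →ₗ[ℝ] (Fin n → ℝ)) (α εinf : ℝ) : ℝ :=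
  OmegaF n P * zCrit n α + εinf

open Classical in
/-- Lower band: `ΠY − c·𝟙` if `T ≤ q`, else `Y − z·𝟙`. -/
def bandL (n : ℕ) (P : (Fin n → ℝ) →ₗ[ℝ] (Fin n → ℝ)) (q α εinf : ℝ)
    (y : Fin n → ℝ) : Fin n → ℝ :=
  fun i => if Tstat n P y ≤ q then P y i - cRad n P α εinf else y i - zCrit n α

open Classical in
/-- Upper band: `ΠY + c·𝟙` if `T ≤ q`, else `Y + z·𝟙`. -/
def bandU (n : ℕ) (P : (Fin n → ℝ) →ₗ[ℝ] (Fin n → ℝ)) (q α εinf : ℝ)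
    (y : Fin n → ℝ) : Fin n → ℝ :=
  fun i => if Tstat n P y ≤ q then P y i + cRad n P α εinf else y i + zCrit n α


section AuxProofs
open scoped ENNReal NNReal


lemma gauss_pdf_conv (a b : ℝ≥0) (ha : a ≠ 0) (hb : b ≠ 0) (t : ℝ) :
    (∫ x : ℝ, gaussianPDFReal 0 a x * gaussianPDFReal 0 b (t - x))
      = gaussianPDFReal 0 (a + b) t := by
  have hπ := Real.pi_pos
  have ha' : (0:ℝ) < a := lt_of_le_of_ne a.coe_nonneg (by exact_mod_cast ha.symm)
  have hb' : (0:ℝ) < b := lt_of_le_of_ne b.coe_nonneg (by exact_mod_cast hb.symm)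
  have hc' : (0:ℝ) < (a:ℝ) + b := by linarith
  set k : ℝ := ((a:ℝ) + b) / (2 * a * b) with hk
  have hkpos : 0 < k := by positivity
  set m : ℝ := (a:ℝ) * t / ((a:ℝ) + b) with hm
  set D : ℝ := (Real.sqrt (2 * π * a))⁻¹ * (Real.sqrt (2 * π * b))⁻¹
      * Real.exp (- t ^ 2 / (2 * ((a:ℝ) + b))) with hD
  have key : ∀ x : ℝ, gaussianPDFReal 0 a x * gaussianPDFReal 0 b (t - x)
      = D * Real.exp (-(k * (x - m) ^ 2)) := by
    intro x
    have hexp : Real.exp (-(x - 0) ^ 2 / (2 * a)) * Real.exp (-(t - x - 0) ^ 2 / (2 * b))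
        = Real.exp (- t ^ 2 / (2 * ((a:ℝ) + b))) * Real.exp (-(k * (x - m) ^ 2)) := by
      rw [← Real.exp_add, ← Real.exp_add]
      congr 1
      rw [hk, hm]
      field_simp
      ring
    unfold gaussianPDFReal
    push_cast
    calc (Real.sqrt (2 * π * a))⁻¹ * Real.exp (-(x - 0) ^ 2 / (2 * a))
          * ((Real.sqrt (2 * π * b))⁻¹ * Real.exp (-(t - x - 0) ^ 2 / (2 * b)))
        = (Real.sqrt (2 * π * a))⁻¹ * (Real.sqrt (2 * π * b))⁻¹
          * (Real.exp (-(x - 0) ^ 2 / (2 * a)) * Real.exp (-(t - x - 0) ^ 2 / (2 * b))) := by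
          ring
      _ = D * Real.exp (-(k * (x - m) ^ 2)) := by rw [hexp, hD]; ring
  simp_rw [key]
  rw [integral_const_mul]
  have h1 : (∫ x : ℝ, Real.exp (-(k * (x - m) ^ 2)))
      = ∫ x : ℝ, Real.exp (-k * x ^ 2) := by
    rw [← integral_sub_right_eq_self (fun x => Real.exp (-k * x ^ 2)) m]
    simp [neg_mul]
  rw [h1, integral_gaussian]
  have hconst : (Real.sqrt (2 * π * a))⁻¹ * (Real.sqrt (2 * π * b))⁻¹ * Real.sqrt (π / k)
      = (Real.sqrt (2 * π * ((a:ℝ) + b)))⁻¹ := by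
    rw [← Real.sqrt_inv, ← Real.sqrt_inv, ← Real.sqrt_mul (by positivity),
      ← Real.sqrt_mul (by positivity), ← Real.sqrt_inv]
    congr 1
    rw [hk]
    field_simp
  unfold gaussianPDFReal
  push_cast
  rw [hD]
  calc (Real.sqrt (2 * π * a))⁻¹ * (Real.sqrt (2 * π * b))⁻¹
        * Real.exp (- t ^ 2 / (2 * ((a:ℝ) + b))) * Real.sqrt (π / k)
      = ((Real.sqrt (2 * π * a))⁻¹ * (Real.sqrt (2 * π * b))⁻¹ * Real.sqrt (π / k))
        * Real.exp (- t ^ 2 / (2 * ((a:ℝ) + b))) := by ring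
    _ = (Real.sqrt (2 * π * ((a:ℝ) + b)))⁻¹ * Real.exp (-(t - 0) ^ 2 / (2 * ((a:ℝ) + b))) := by
        rw [hconst]; ring_nf


attribute [fun_prop] ProbabilityTheory.measurable_gaussianPDF


lemma gaussianPDFReal_le (μ : ℝ) (v : ℝ≥0) (x : ℝ) :
    gaussianPDFReal μ v x ≤ (Real.sqrt (2 * π * v))⁻¹ := by
  unfold gaussianPDFReal
  have h1 : Real.exp (-(x - μ) ^ 2 / (2 * v)) ≤ 1 := by
    rw [Real.exp_le_one_iff]
    by_cases hv : (v:ℝ) = 0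
    · simp [hv]
    · have h2 : (0:ℝ) < v := lt_of_le_of_ne v.coe_nonneg (Ne.symm hv)
      have h3 := sq_nonneg (x - μ)
      have h4 : (0:ℝ) < 2 * v := by linarith
      exact div_nonpos_of_nonpos_of_nonneg (by linarith) (by linarith)
  calc (Real.sqrt (2 * π * v))⁻¹ * Real.exp (-(x - μ) ^ 2 / (2 * v))
      ≤ (Real.sqrt (2 * π * v))⁻¹ * 1 := by
        apply mul_le_mul_of_nonneg_left h1
        positivity
    _ = (Real.sqrt (2 * π * v))⁻¹ := mul_one _

lemma integrable_gauss_pdf_mul (a b : ℝ≥0) (t : ℝ) :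
    Integrable (fun x => gaussianPDFReal 0 a x * gaussianPDFReal 0 b (t - x)) := by
  have hI : Integrable (fun x => gaussianPDFReal 0 b (t - x) * gaussianPDFReal 0 a x) := by
    refine Integrable.bdd_mul (c := (Real.sqrt (2 * π * b))⁻¹) (integrable_gaussianPDFReal 0 a) ?_ ?_
    · exact ((measurable_gaussianPDFReal 0 b).comp
        (measurable_const.sub measurable_id)).aestronglyMeasurable
    · refine ae_of_all _ fun x => ?_
      rw [Real.norm_eq_abs, abs_of_nonneg (gaussianPDFReal_nonneg _ _ _)]
      exact gaussianPDFReal_le _ _ _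
  simpa [mul_comm] using hI

lemma lintegral_gauss_pdf_mul (a b : ℝ≥0) (ha : a ≠ 0) (hb : b ≠ 0) (t : ℝ) :
    (∫⁻ x, gaussianPDF 0 a x * gaussianPDF 0 b (t - x)) = gaussianPDF 0 (a + b) t := by
  unfold gaussianPDF
  simp_rw [← ENNReal.ofReal_mul (gaussianPDFReal_nonneg 0 a _)]
  rw [← ofReal_integral_eq_lintegral_ofReal (integrable_gauss_pdf_mul a b t)
    (ae_of_all _ fun x => mul_nonneg (gaussianPDFReal_nonneg _ _ _) (gaussianPDFReal_nonneg _ _ _)),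
    gauss_pdf_conv a b ha hb t]

lemma gauss_conv_zero (a b : ℝ≥0) (ha : a ≠ 0) (hb : b ≠ 0) :
    ((gaussianReal 0 a).prod (gaussianReal 0 b)).map (fun p => p.1 + p.2)
      = gaussianReal 0 (a + b) := by
  have hab : a + b ≠ 0 := by simp [ha]
  ext s hs
  rw [Measure.map_apply (by fun_prop) hs, Measure.prod_apply (hs.preimage (by fun_prop))]
  have hset : ∀ x : ℝ, (Prod.mk x ⁻¹' ((fun p : ℝ × ℝ => p.1 + p.2) ⁻¹' s))
      = (fun y => y + x) ⁻¹' s := by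
    intro x; ext y; simp [add_comm]
  simp_rw [hset]
  have hinner : ∀ x : ℝ, (gaussianReal 0 b) ((fun y => y + x) ⁻¹' s)
      = ∫⁻ t, s.indicator 1 t * gaussianPDF 0 b (t - x) := by
    intro x
    rw [gaussianReal_apply 0 hb, ← lintegral_indicator (hs.preimage (by fun_prop))]
    rw [← lintegral_add_right_eq_self (fun y => Set.indicator s 1 y * gaussianPDF 0 b (y - x)) x]
    congr 1 with y
    by_cases hy : y + x ∈ s
    · simp [Set.indicator_of_mem hy, Set.indicator_of_mem, hy]
    · simp [Set.indicator_of_notMem hy, hy]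
  simp_rw [hinner]
  have hmeas : Measurable fun x : ℝ => ∫⁻ t, s.indicator 1 t * gaussianPDF 0 b (t - x) := by
    apply Measurable.lintegral_prod_right' (f := fun p : ℝ × ℝ => s.indicator 1 p.2 * gaussianPDF 0 b (p.2 - p.1))
    fun_prop (disch := exact hs)
  rw [gaussianReal_of_var_ne_zero 0 ha,
    lintegral_withDensity_eq_lintegral_mul _ (measurable_gaussianPDF _ _) hmeas]
  simp only [Pi.mul_apply]
  have hfin : ∀ x : ℝ, gaussianPDF 0 a x ≠ ∞ := fun x => ENNReal.ofReal_ne_top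
  have hstep : ∀ x : ℝ, gaussianPDF 0 a x * ∫⁻ t, s.indicator 1 t * gaussianPDF 0 b (t - x)
      = ∫⁻ t, s.indicator 1 t * (gaussianPDF 0 a x * gaussianPDF 0 b (t - x)) := by
    intro x
    rw [← lintegral_const_mul' _ _ (hfin x)]
    congr 1 with t
    ring
  simp_rw [hstep]
  rw [lintegral_lintegral_swap]
  · have hpt : ∀ t : ℝ, (∫⁻ x, s.indicator 1 t * (gaussianPDF 0 a x * gaussianPDF 0 b (t - x)))
        = s.indicator 1 t * gaussianPDF 0 (a + b) t := by
      intro t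
      rw [lintegral_const_mul' _ _ (by
        by_cases hts : t ∈ s
        · simp [Set.indicator_of_mem hts]
        · simp [Set.indicator_of_notMem hts]),
        lintegral_gauss_pdf_mul a b ha hb t]
    simp_rw [hpt]
    rw [gaussianReal_apply 0 hab, ← lintegral_indicator hs]
    congr 1 with t
    by_cases hts : t ∈ s
    · simp [Set.indicator_of_mem hts]
    · simp [Set.indicator_of_notMem hts]
  · apply Measurable.aemeasurable
    fun_prop (disch := exact hs)



lemma gauss_conv (m₁ m₂ : ℝ) (a b : ℝ≥0) :
    ((gaussianReal m₁ a).prod (gaussianReal m₂ b)).map (fun p : ℝ × ℝ => p.1 + p.2)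
      = gaussianReal (m₁ + m₂) (a + b) := by
  -- first reduce to zero means
  have hzero : ∀ (a b : ℝ≥0), ((gaussianReal 0 a).prod (gaussianReal 0 b)).map
      (fun p : ℝ × ℝ => p.1 + p.2) = gaussianReal 0 (a + b) := by
    intro a b
    by_cases ha : a = 0
    · subst ha
      rw [gaussianReal_zero_var, Measure.dirac_prod, Measure.map_map (by fun_prop) (by fun_prop)]
      have : ((fun p : ℝ × ℝ => p.1 + p.2) ∘ fun x : ℝ => ((0:ℝ), x)) = fun x : ℝ => x + 0 := by
        ext x; simp
      rw [this]
      simp [gaussianReal_map_add_const]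
    by_cases hb : b = 0
    · subst hb
      rw [gaussianReal_zero_var, Measure.prod_dirac, Measure.map_map (by fun_prop) (by fun_prop)]
      have : ((fun p : ℝ × ℝ => p.1 + p.2) ∘ fun x : ℝ => (x, (0:ℝ))) = fun x : ℝ => x + 0 := by
        ext x; simp
      rw [this]
      simp [gaussianReal_map_add_const]
    · exact gauss_conv_zero a b ha hb
  have h1 : gaussianReal m₁ a = (gaussianReal 0 a).map (· + m₁) := by
    rw [gaussianReal_map_add_const]; simp
  have h2 : gaussianReal m₂ b = (gaussianReal 0 b).map (· + m₂) := by
    rw [gaussianReal_map_add_const]; simp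
  rw [h1, h2, Measure.map_prod_map _ _ (by fun_prop) (by fun_prop),
    Measure.map_map (by fun_prop) (by fun_prop)]
  have : ((fun p : ℝ × ℝ => p.1 + p.2) ∘ Prod.map (· + m₁) (· + m₂))
      = (fun x => x + (m₁ + m₂)) ∘ (fun p : ℝ × ℝ => p.1 + p.2) := by
    ext p; simp [Prod.map]; ring
  rw [this, ← Measure.map_map (by fun_prop) (by fun_prop), hzero,
    gaussianReal_map_add_const]
  simp



lemma map_linComb : ∀ (m : ℕ) (u f : Fin m → ℝ),
    (Measure.pi fun i : Fin m => gaussianReal (f i) 1).map (fun y => ∑ j, u j * y j)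
      = gaussianReal (∑ j, u j * f j) (Real.toNNReal (∑ j, (u j)^2)) := by
  intro m
  induction m with
  | zero =>
      intro u f
      simp only [Finset.univ_eq_empty, Finset.sum_empty]
      have : (fun y : Fin 0 → ℝ => (0:ℝ)) = fun _ => (0:ℝ) := rfl
      rw [Measure.map_const]
      simp
  | succ m ih =>
      intro u f
      set μ : ∀ i : Fin (m+1), Measure ℝ := fun i => gaussianReal (f i) 1 with hμ
      have MP := measurePreserving_piFinSuccAbove μ 0
      set e := MeasurableEquiv.piFinSuccAbove (fun _ : Fin (m+1) => ℝ) 0 with he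
      have hpi : Measure.pi μ = Measure.map e.symm ((μ 0).prod
          (Measure.pi fun j : Fin m => μ ((0 : Fin (m+1)).succAbove j))) := by
        rw [← MP.map_eq, Measure.map_map (by exact e.symm.measurable) (by exact e.measurable)]
        simp
      rw [hpi, Measure.map_map (by fun_prop) (by exact e.symm.measurable)]
      have hcomp : ((fun y : Fin (m+1) → ℝ => ∑ j, u j * y j) ∘ e.symm)
          = (fun q : ℝ × ℝ => q.1 + q.2) ∘ (Prod.map (fun x : ℝ => u 0 * x)
              (fun g : Fin m → ℝ => ∑ j, u (Fin.succ j) * g j)) := by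
        ext p
        simp only [Function.comp_apply, he, MeasurableEquiv.piFinSuccAbove_symm_apply,
          Fin.insertNth_zero, Prod.map]
        rw [Fin.sum_univ_succ]
        simp
      rw [hcomp, ← Measure.map_map (by fun_prop) (by fun_prop),
        ← Measure.map_prod_map _ _ (by fun_prop) (by fun_prop)]
      have htail : (Measure.pi fun j : Fin m => μ ((0 : Fin (m+1)).succAbove j))
          = Measure.pi fun j : Fin m => gaussianReal (f (Fin.succ j)) 1 := by
        have : (fun j : Fin m => μ ((0 : Fin (m+1)).succAbove j))
            = fun j : Fin m => gaussianReal (f (Fin.succ j)) 1 := by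
          funext j
          rw [hμ, Fin.zero_succAbove]
        rw [this]
      rw [htail, ih (fun j => u (Fin.succ j)) (fun j => f (Fin.succ j))]
      have h0 : Measure.map (fun x : ℝ => u 0 * x) (μ 0)
          = gaussianReal (u 0 * f 0) (NNReal.mk ((u 0)^2) (sq_nonneg _)) := by
        rw [hμ]
        rw [gaussianReal_map_const_mul]
        simp
      rw [h0, gauss_conv]
      congr 1
      · rw [Fin.sum_univ_succ]
      · have hnn : (0:ℝ) ≤ ∑ j : Fin m, (u (Fin.succ j))^2 :=
          Finset.sum_nonneg fun j _ => sq_nonneg _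
        have hnn2 : (0:ℝ) ≤ ∑ j : Fin (m+1), (u j)^2 :=
          Finset.sum_nonneg fun j _ => sq_nonneg _
        ext
        push_cast
        rw [Real.coe_toNNReal _ hnn, Real.coe_toNNReal _ hnn2, Fin.sum_univ_succ]




lemma gauss_fin (s : Set ℝ) : gaussianReal 0 1 s ≠ ∞ :=
  (measure_lt_top _ _).ne

lemma gauss_Iic_ofReal (z : ℝ) :
    gaussianReal 0 1 (Set.Iic z) = ENNReal.ofReal (stdCDF z) := by
  rw [stdCDF, ENNReal.ofReal_toReal (gauss_fin _)]

lemma stdCDF_nonneg (z : ℝ) : 0 ≤ stdCDF z := ENNReal.toReal_nonneg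

lemma gauss_le_one (s : Set ℝ) : gaussianReal 0 1 s ≤ 1 := prob_le_one

lemma stdCDF_le_one (z : ℝ) : stdCDF z ≤ 1 := by
  rw [stdCDF]
  exact ENNReal.toReal_le_of_le_ofReal zero_le_one (by simpa using gauss_le_one _)

lemma stdCDF_mono : Monotone stdCDF := fun a b hab =>
  ENNReal.toReal_mono (gauss_fin _) (measure_mono (Set.Iic_subset_Iic.mpr hab))

lemma gauss_neg_map : (gaussianReal 0 1).map (fun x : ℝ => -1 * x) = gaussianReal 0 1 := by
  rw [gaussianReal_map_const_mul]
  norm_num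

lemma gauss_singleton (z : ℝ) : gaussianReal 0 1 {z} = 0 :=
  gaussianReal_absolutelyContinuous 0 one_ne_zero (volume_singleton)

lemma gauss_Iio_eq_Iic (z : ℝ) :
    gaussianReal 0 1 (Set.Iio z) = gaussianReal 0 1 (Set.Iic z) :=
  measure_congr (Iio_ae_eq_Iic' (gauss_singleton z))

lemma stdCDF_neg (z : ℝ) : stdCDF (-z) = 1 - stdCDF z := by
  have h1 : gaussianReal 0 1 (Set.Iic (-z)) = gaussianReal 0 1 (Set.Ici z) := by
    conv_lhs => rw [← gauss_neg_map]
    rw [Measure.map_apply (by fun_prop) measurableSet_Iic]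
    congr 1
    ext x
    simp
  have h2 : gaussianReal 0 1 (Set.Ici z) = 1 - gaussianReal 0 1 (Set.Iic z) := by
    rw [← Set.compl_Iio, prob_compl_eq_one_sub measurableSet_Iio, gauss_Iio_eq_Iic]
  rw [stdCDF, h1, h2, ENNReal.toReal_sub_of_le (by simpa using gauss_le_one _) ENNReal.one_ne_top]
  simp [stdCDF]

lemma gauss_Ioi (z : ℝ) :
    gaussianReal 0 1 (Set.Ioi z) = ENNReal.ofReal (1 - stdCDF z) := by
  rw [← Set.compl_Iic, prob_compl_eq_one_sub measurableSet_Iic, gauss_Iic_ofReal,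
    ← ENNReal.ofReal_one, ← ENNReal.ofReal_sub _ (stdCDF_nonneg z)]

lemma stdCDF_sub_le {a b : ℝ} (hab : a ≤ b) : stdCDF b - stdCDF a ≤ b - a := by
  have hsplit : gaussianReal 0 1 (Set.Iic b)
      = gaussianReal 0 1 (Set.Iic a) + gaussianReal 0 1 (Set.Ioc a b) := by
    rw [← measure_union (Set.Iic_disjoint_Ioc le_rfl) measurableSet_Ioc,
      Set.Iic_union_Ioc_eq_Iic hab]
  have hbound : gaussianReal 0 1 (Set.Ioc a b) ≤ ENNReal.ofReal (b - a) := by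
    rw [gaussianReal_apply 0 one_ne_zero]
    calc ∫⁻ x in Set.Ioc a b, gaussianPDF 0 1 x
        ≤ ∫⁻ _ in Set.Ioc a b, 1 := by
          apply lintegral_mono
          intro x
          rw [gaussianPDF, ← ENNReal.ofReal_one]
          apply ENNReal.ofReal_le_ofReal
          calc gaussianPDFReal 0 1 x ≤ (Real.sqrt (2 * π * (1:ℝ≥0)))⁻¹ :=
                gaussianPDFReal_le 0 1 x
            _ ≤ 1 := by
                rw [inv_le_one_iff₀]
                right
                rw [show ((1:ℝ≥0):ℝ) = 1 by norm_num, mul_one, Real.one_le_sqrt]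
                nlinarith [Real.pi_gt_three]
      _ = ENNReal.ofReal (b - a) := by rw [setLIntegral_one, Real.volume_Ioc]
  rw [stdCDF, stdCDF, hsplit, ENNReal.toReal_add (gauss_fin _) (gauss_fin _)]
  have h3 : (gaussianReal 0 1 (Set.Ioc a b)).toReal ≤ b - a :=
    ENNReal.toReal_le_of_le_ofReal (by linarith) hbound
  linarith

lemma stdCDF_continuous : Continuous stdCDF := by
  refine LipschitzWith.continuous (K := 1) ?_
  apply LipschitzWith.of_dist_le_mul
  intro a b
  simp only [NNReal.coe_one, one_mul, Real.dist_eq]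
  rcases le_total a b with hab | hab
  · have key := stdCDF_sub_le hab
    have := stdCDF_mono hab
    rw [abs_of_nonpos (by linarith), abs_of_nonpos (by linarith)]
    linarith
  · have key := stdCDF_sub_le hab
    have := stdCDF_mono hab
    rw [abs_of_nonneg (by linarith), abs_of_nonneg (by linarith)]
    linarith

lemma stdCDF_tendsto_atTop : Filter.Tendsto stdCDF Filter.atTop (nhds 1) := by
  have h := tendsto_measure_Iic_atTop (gaussianReal 0 1)
  rw [measure_univ] at h
  have h2 := (ENNReal.tendsto_toReal ENNReal.one_ne_top).comp h
  simp only [ENNReal.toReal_one] at h2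
  exact h2

lemma stdCDF_exists (p : ℝ) (hp0 : 0 < p) (hp1 : p < 1) : ∃ x, stdCDF x = p := by
  obtain ⟨b, hb⟩ : ∃ b, p < stdCDF b := by
    have := stdCDF_tendsto_atTop.eventually (eventually_gt_nhds hp1)
    exact this.exists
  obtain ⟨a, ha⟩ : ∃ a, stdCDF a < p := by
    obtain ⟨b', hb'⟩ : ∃ b', 1 - p < stdCDF b' := by
      have := stdCDF_tendsto_atTop.eventually (eventually_gt_nhds (by linarith : 1 - p < 1))
      exact this.exists
    exact ⟨-b', by rw [stdCDF_neg]; linarith⟩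
  have hab : min a b ≤ b := min_le_right _ _
  have h1 : stdCDF (min a b) ≤ stdCDF a := stdCDF_mono (min_le_left _ _)
  have := intermediate_value_Icc hab stdCDF_continuous.continuousOn
  have hmem : p ∈ Set.Icc (stdCDF (min a b)) (stdCDF b) := ⟨by linarith, le_of_lt hb⟩
  obtain ⟨x, _, hx⟩ := this hmem
  exact ⟨x, hx⟩

lemma PhiInv_spec {p : ℝ} (hp0 : 0 < p) (hp1 : p < 1) : stdCDF (PhiInv p) = p :=
  Function.invFun_eq (stdCDF_exists p hp0 hp1)

lemma PhiInv_nonneg {p : ℝ} (hp : 1/2 < p) (hp1 : p < 1) : 0 ≤ PhiInv p := by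
  by_contra h
  push_neg at h
  have h0 : stdCDF 0 = 1/2 := by
    have := stdCDF_neg 0
    rw [neg_zero] at this
    linarith
  have := stdCDF_mono (le_of_lt h)
  rw [PhiInv_spec (by linarith) hp1, h0] at this
  linarith



lemma gauss_two_tail (z : ℝ) :
    gaussianReal 0 1 {x : ℝ | z < |x|} ≤ ENNReal.ofReal (2 * (1 - stdCDF z)) := by
  have hset : {x : ℝ | z < |x|} = Set.Iio (-z) ∪ Set.Ioi z := by
    ext x
    simp only [Set.mem_setOf_eq, Set.mem_union, Set.mem_Iio, Set.mem_Ioi, lt_abs]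
    constructor
    · rintro (h | h)
      · right; exact h
      · left; linarith
    · rintro (h | h)
      · right; linarith
      · left; exact h
  rw [hset]
  calc gaussianReal 0 1 (Set.Iio (-z) ∪ Set.Ioi z)
      ≤ gaussianReal 0 1 (Set.Iio (-z)) + gaussianReal 0 1 (Set.Ioi z) := measure_union_le _ _
    _ = ENNReal.ofReal (1 - stdCDF z) + ENNReal.ofReal (1 - stdCDF z) := by
        rw [gauss_Iio_eq_Iic, gauss_Iic_ofReal, stdCDF_neg, gauss_Ioi]
    _ = ENNReal.ofReal (2 * (1 - stdCDF z)) := by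
        rw [← ENNReal.ofReal_add (by linarith [stdCDF_le_one z]) (by linarith [stdCDF_le_one z])]
        congr 1
        ring

lemma gauss_tail (μt : ℝ) (v : ℝ≥0) (w z : ℝ) (hz : 0 ≤ z) (hw : Real.sqrt v ≤ w) :
    gaussianReal μt v {x : ℝ | w * z < |x - μt|} ≤ ENNReal.ofReal (2 * (1 - stdCDF z)) := by
  set s : ℝ := Real.sqrt v with hs
  have hs0 : 0 ≤ s := Real.sqrt_nonneg _
  have hw0 : 0 ≤ w := le_trans hs0 hw
  have hmeas : MeasurableSet {x : ℝ | w * z < |x - μt|} :=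
    measurableSet_lt measurable_const (by fun_prop)
  have h1 : gaussianReal μt v = (gaussianReal 0 v).map (· + μt) := by
    rw [gaussianReal_map_add_const, zero_add]
  have hsq : (NNReal.mk (s^2) (sq_nonneg _)) * 1 = v := by
    rw [mul_one]
    ext
    simp [hs, Real.sq_sqrt v.coe_nonneg]
  have h2 : gaussianReal 0 v = (gaussianReal 0 1).map (fun x => s * x) := by
    rw [gaussianReal_map_const_mul, mul_zero, hsq]
  rw [h1, Measure.map_apply (by fun_prop) hmeas, h2,
    Measure.map_apply (by fun_prop) (hmeas.preimage (by fun_prop))]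
  calc gaussianReal 0 1 ((fun x => s * x) ⁻¹' ((· + μt) ⁻¹' {x : ℝ | w * z < |x - μt|}))
      ≤ gaussianReal 0 1 {x : ℝ | z < |x|} := by
        apply measure_mono
        intro x hx
        simp only [Set.mem_preimage, Set.mem_setOf_eq, add_sub_cancel_right] at hx
        simp only [Set.mem_setOf_eq]
        by_contra hcon
        push_neg at hcon
        have : |s * x| ≤ w * z := by
          rw [abs_mul, abs_of_nonneg hs0]
          calc s * |x| ≤ s * z := mul_le_mul_of_nonneg_left hcon hs0
            _ ≤ w * z := mul_le_mul_of_nonneg_right hw hz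
        linarith
    _ ≤ ENNReal.ofReal (2 * (1 - stdCDF z)) := gauss_two_tail z

end AuxProofs


section AuxProofs2
open scoped ENNReal NNReal






lemma sum_single_mul (n : ℕ) (i : Fin n) (y : Fin n → ℝ) :
    ∑ j, (Pi.single i 1 : Fin n → ℝ) j * y j = y i := by
  simp [Pi.single_apply]

lemma sum_mul_single (n : ℕ) (i : Fin n) (y : Fin n → ℝ) :
    ∑ j, y j * (Pi.single i 1 : Fin n → ℝ) j = y i := by
  simp [Pi.single_apply]

lemma sum_single_sq (n : ℕ) (i : Fin n) : ∑ j, ((Pi.single i 1 : Fin n → ℝ) j)^2 = 1 := by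
  simp [Pi.single_apply, sq]

lemma apply_eq_sum (n : ℕ) (P : (Fin n → ℝ) →ₗ[ℝ] (Fin n → ℝ)) (y : Fin n → ℝ) (i : Fin n) :
    P y i = ∑ j, P (Pi.single j 1) i * y j := by
  have hy : y = ∑ j, y j • (Pi.single j 1 : Fin n → ℝ) := by
    funext k
    rw [Finset.sum_apply]
    simp [Pi.single_apply]
  conv_lhs => rw [hy]
  rw [map_sum]
  rw [Finset.sum_apply]
  congr 1 with j
  rw [P.map_smul]
  simp [mul_comm]

lemma proj_symm {n : ℕ} (hn : 0 < n) {F : Submodule ℝ (Fin n → ℝ)}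
    {P : (Fin n → ℝ) →ₗ[ℝ] (Fin n → ℝ)} (hP : IsOrthProjOn n F P) (i j : Fin n) :
    P (Pi.single j 1) i = P (Pi.single i 1) j := by
  have hnR : (n:ℝ) ≠ 0 := Nat.cast_ne_zero.mpr hn.ne'
  have key : ∀ a b : Fin n → ℝ, ∑ k, a k * P b k = ∑ k, P a k * b k := by
    have base : ∀ a b : Fin n → ℝ, ∑ k, a k * P b k = ∑ k, P a k * P b k := by
      intro a b
      have h0 := hP.2 a (P b) (hP.1 b)
      rw [inner2, div_eq_zero_iff] at h0
      rcases h0 with h0 | h0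
      · have : ∑ k, (a k * P b k - P a k * P b k) = 0 := by
          rw [← h0]
          congr 1 with k
          simp [sub_mul]
        rw [Finset.sum_sub_distrib] at this
        linarith
      · exact absurd h0 hnR
    intro a b
    rw [base a b]
    have h2 := base b a
    have h3 : ∑ k, P a k * P b k = ∑ k, P b k * P a k := by
      congr 1 with k; ring
    have h4 : ∑ k, b k * P a k = ∑ k, P a k * b k := by
      congr 1 with k; ring
    linarith
  calc P (Pi.single j 1) i = ∑ k, (Pi.single i 1 : Fin n → ℝ) k * P (Pi.single j 1) k :=
        (sum_single_mul n i _).symm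
    _ = ∑ k, P (Pi.single i 1) k * (Pi.single j 1 : Fin n → ℝ) k := key _ _
    _ = P (Pi.single i 1) j := sum_mul_single n j _

lemma sqrt_row_le_Omega {n : ℕ} (hn : 0 < n) (P : (Fin n → ℝ) →ₗ[ℝ] (Fin n → ℝ)) (i : Fin n) :
    Real.sqrt (∑ j, (P (Pi.single i 1) j)^2) ≤ OmegaF n P := by
  have hnR : (0:ℝ) < n := Nat.cast_pos.mpr hn
  have hterm : norm2 n (P (Pi.single i 1)) / norm2 n (Pi.single i 1)
      = Real.sqrt (∑ j, (P (Pi.single i 1) j)^2) := by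
    rw [norm2, norm2, sum_single_sq, ← Real.sqrt_div (by positivity)]
    congr 1
    field_simp
  rw [OmegaF, ← hterm]
  exact le_ciSup (f := fun i : Fin n => norm2 n (P (Pi.single i 1)) / norm2 n (Pi.single i 1))
    (Set.Finite.bddAbove (Set.finite_range _)) i

end AuxProofs2

/-- the pretesting band covers the true `f` with probability at
least `1−α` uniformly over the enlarged set
`V = {f : ‖f−Πf‖ ≤ ε₂ and ‖f−Πf‖_∞ ≤ ε_∞}` (σ = 1). -/
theorem band_coverage_on_V (n d : ℕ) (hd : d < n)
    (F : Submodule ℝ (Fin n → ℝ)) (hdim : Module.finrank ℝ F = d)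
    (P : (Fin n → ℝ) →ₗ[ℝ] (Fin n → ℝ)) (hP : IsOrthProjOn n F P)
    (ε2 εinf : ℝ) (hε2 : 0 < ε2) (hεinf : 0 < εinf)
    (α γ : ℝ) (hα : 0 < α) (hα1 : α < 1) (hγ : 0 < γ) (hγ1 : γ < 1)
    (q : ℝ) (hq : q = chiSqQuantile (n - d) (1 - γ)) :
    ∀ f : Fin n → ℝ, norm2 n (f - P f) ≤ ε2 → normInf n (f - P f) ≤ εinf →
      ENNReal.ofReal (1 - α) ≤ gaussP n f 1
        {y | covers n (bandL n P q α εinf) (bandU n P q α εinf) f y} := by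
  intro f hf2 hfinf
  have hn : 0 < n := lt_of_le_of_lt (Nat.zero_le d) hd
  have hnR : (0:ℝ) < n := Nat.cast_pos.mpr hn
  have hG : gaussP n f 1 = Measure.pi fun i => gaussianReal (f i) 1 := by
    simp [gaussP]
  rw [hG]
  set G : Measure (Fin n → ℝ) := Measure.pi fun i => gaussianReal (f i) 1 with hGdef
  haveI : IsProbabilityMeasure G := by
    rw [hGdef]
    infer_instance
  -- quantile facts
  set pp : ℝ := 1 - α / (4 * n) with hpdef
  have hfrac0 : 0 < α / (4 * n) := by positivity
  have hfrac : α / (4 * n) < 1/4 := by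
    rw [div_lt_iff₀ (by positivity)]
    have h1n : (1:ℝ) ≤ n := by exact_mod_cast hn
    nlinarith
  have hp1 : pp < 1 := by rw [hpdef]; linarith
  have hphalf : 1/2 < pp := by rw [hpdef]; linarith
  set z : ℝ := zCrit n α with hzdef
  have hzspec : stdCDF z = pp := PhiInv_spec (by linarith) hp1
  have hz0 : 0 ≤ z := PhiInv_nonneg hphalf hp1
  have htail : 2 * (1 - stdCDF z) = α / (2 * n) := by rw [hzspec, hpdef]; ring
  set Ω : ℝ := OmegaF n P with hΩdef
  -- row vectors of P
  set w : Fin n → Fin n → ℝ := fun i j => P (Pi.single j 1) i with hwdef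
  have hXw : ∀ (i : Fin n) (y : Fin n → ℝ), ∑ j, w i j * y j = P y i :=
    fun i y => (apply_eq_sum n P y i).symm
  -- events
  set A : Fin n → Set (Fin n → ℝ) := fun i =>
    (fun y : Fin n → ℝ => ∑ j, (Pi.single i 1 : Fin n → ℝ) j * y j)
      ⁻¹' {x : ℝ | 1 * z < |x - f i|} with hAdef
  set B : Fin n → Set (Fin n → ℝ) := fun i =>
    (fun y : Fin n → ℝ => ∑ j, w i j * y j) ⁻¹' {x : ℝ | Ω * z < |x - P f i|} with hBdef
  have hmeasS : ∀ c : ℝ, MeasurableSet {x : ℝ | c < |x - (0:ℝ)| } := fun c =>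
    measurableSet_lt measurable_const (by fun_prop)
  have hmeasA : ∀ i, MeasurableSet (A i) :=
    fun i => (measurableSet_lt measurable_const (by fun_prop)).preimage (by fun_prop)
  have hmeasB : ∀ i, MeasurableSet (B i) :=
    fun i => (measurableSet_lt measurable_const (by fun_prop)).preimage (by fun_prop)
  -- measure bounds
  have hA : ∀ i, G (A i) ≤ ENNReal.ofReal (α / (2 * n)) := by
    intro i
    rw [hAdef]
    rw [← Measure.map_apply (by fun_prop)
      (measurableSet_lt measurable_const (by fun_prop)), hGdef,
      map_linComb n (Pi.single i 1) f, sum_single_mul n i f, sum_single_sq n i]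
    calc gaussianReal (f i) (Real.toNNReal 1) {x : ℝ | 1 * z < |x - f i|}
        ≤ ENNReal.ofReal (2 * (1 - stdCDF z)) := by
          apply gauss_tail (f i) _ 1 z hz0
          simp
      _ = ENNReal.ofReal (α / (2 * n)) := by rw [htail]
  have hB : ∀ i, G (B i) ≤ ENNReal.ofReal (α / (2 * n)) := by
    intro i
    rw [hBdef]
    rw [← Measure.map_apply (by fun_prop)
      (measurableSet_lt measurable_const (by fun_prop)), hGdef,
      map_linComb n (w i) f, hXw i f]
    calc gaussianReal (P f i) (Real.toNNReal (∑ j, (w i j)^2)) {x : ℝ | Ω * z < |x - P f i|}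
        ≤ ENNReal.ofReal (2 * (1 - stdCDF z)) := by
          apply gauss_tail (P f i) _ Ω z hz0
          have hnn : (0:ℝ) ≤ ∑ j, (w i j)^2 := Finset.sum_nonneg fun j _ => sq_nonneg _
          rw [Real.coe_toNNReal _ hnn]
          have hswap : ∑ j, (w i j)^2 = ∑ j, (P (Pi.single i 1) j)^2 := by
            congr 1 with j
            rw [show w i j = P (Pi.single i 1) j from proj_symm hn hP i j]
          rw [hswap]
          exact sqrt_row_le_Omega hn P i
      _ = ENNReal.ofReal (α / (2 * n)) := by rw [htail]
  set Fail : Set (Fin n → ℝ) := ⋃ i, A i ∪ B i with hFdef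
  have hmeasFail : MeasurableSet Fail :=
    MeasurableSet.iUnion fun i => (hmeasA i).union (hmeasB i)
  have hFail : G Fail ≤ ENNReal.ofReal α := by
    calc G Fail ≤ ∑' i, G (A i ∪ B i) := measure_iUnion_le _
      _ = ∑ i, G (A i ∪ B i) := tsum_fintype _
      _ ≤ ∑ _i : Fin n, ENNReal.ofReal (α / n) := by
          apply Finset.sum_le_sum
          intro i _
          calc G (A i ∪ B i) ≤ G (A i) + G (B i) := measure_union_le _ _
            _ ≤ ENNReal.ofReal (α / (2*n)) + ENNReal.ofReal (α / (2*n)) :=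
                add_le_add (hA i) (hB i)
            _ = ENNReal.ofReal (α / n) := by
                rw [← ENNReal.ofReal_add (by positivity) (by positivity)]
                congr 1
                field_simp
                ring
      _ = ENNReal.ofReal α := by
          rw [Finset.sum_const, Finset.card_univ, Fintype.card_fin, nsmul_eq_mul,
            ← ENNReal.ofReal_natCast n, ← ENNReal.ofReal_mul (by positivity)]
          congr 1
          field_simp
  have hsub : Failᶜ ⊆ {y | covers n (bandL n P q α εinf) (bandU n P q α εinf) f y} := by
    intro y hy
    simp only [hFdef, Set.mem_compl_iff, Set.mem_iUnion, not_exists, Set.mem_union,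
      not_or] at hy
    have h1 : ∀ i, |y i - f i| ≤ z := by
      intro i
      have := (hy i).1
      rw [hAdef] at this
      simp only [Set.mem_preimage, Set.mem_setOf_eq, not_lt, sum_single_mul n i y,
        one_mul] at this
      exact this
    have h2 : ∀ i, |P y i - P f i| ≤ Ω * z := by
      intro i
      have := (hy i).2
      rw [hBdef] at this
      simp only [Set.mem_preimage, Set.mem_setOf_eq, not_lt, hXw i y] at this
      exact this
    have h3 : ∀ i, |f i - P f i| ≤ εinf := by
      intro i
      have hle : |(f - P f) i| ≤ normInf n (f - P f) :=
        le_ciSup (f := fun i => |(f - P f) i|)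
          (Set.Finite.bddAbove (Set.finite_range _)) i
      have : (f - P f) i = f i - P f i := rfl
      rw [this] at hle
      linarith
    intro i
    by_cases hT : Tstat n P y ≤ q
    · simp only [bandL, bandU, if_pos hT, cRad, ← hΩdef, ← hzdef]
      have ha := abs_le.mp (h2 i)
      have hb := abs_le.mp (h3 i)
      constructor <;> linarith [ha.1, ha.2, hb.1, hb.2]
    · simp only [bandL, bandU, if_neg hT, ← hzdef]
      have ha := abs_le.mp (h1 i)
      constructor <;> linarith [ha.1, ha.2]
  calc ENNReal.ofReal (1 - α)
      ≤ 1 - ENNReal.ofReal α := by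
        apply ENNReal.le_sub_of_add_le_right ENNReal.ofReal_ne_top
        rw [← ENNReal.ofReal_add (by linarith) (le_of_lt hα), ← ENNReal.ofReal_one]
        apply ENNReal.ofReal_le_ofReal
        linarith
    _ ≤ 1 - G Fail := tsub_le_tsub_left hFail 1
    _ = G Failᶜ := (prob_compl_eq_one_sub hmeasFail).symm
    _ ≤ G {y | covers n (bandL n P q α εinf) (bandU n P q α εinf) f y} :=
        measure_mono hsub

end
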